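/- Let G be an abelian p-group and x ∈ G of exponent n with ⟨x⟩ ∩ G¹ = 0. If the Ulm sequence of x has at least two non-trivial gaps, then there exists y ∈ G with exp(y) = exp(x) such that U(x) is not componentwise ≤ U(y); consequently ⟨x⟩ is not in P(G). -/

import Mathlib

open AddSubgroup

/-- The `p`-height of an element, as an extended natural number. -/
noncomputable def pHeight (p : ℕ) {G : Type*} [AddCommGroup G] (x : G) : ℕ∞ :=
  sSup {n : ℕ∞ | ∃ m : ℕ, n = (m : ℕ∞) ∧ ∃ y : G, p ^ m • y = x}

/-- `G` is an abelian `p`-group. -/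
def IsPGrp (p : ℕ) (G : Type*) [AddCommGroup G] : Prop :=
  ∀ x : G, ∃ n : ℕ, p ^ n • x = 0

/-- `H ∈ Q(G)`: every homomorphism `H → G` extends to an endomorphism of `G`. -/
def InQ {G : Type*} [AddCommGroup G] (H : AddSubgroup G) : Prop :=
  ∀ f : H →+ G, ∃ g : G →+ G, ∀ x : H, g x = f x

/-- `H ∈ P(G)`: every monomorphism `H → G` extends to an endomorphism of `G`. -/
def InP {G : Type*} [AddCommGroup G] (H : AddSubgroup G) : Prop :=
  ∀ f : H →+ G, Function.Injective f → ∃ g : G →+ G, ∀ x : H, g x = f x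

/-- `H ∈ W(G)`: every endomorphism of `H` extends to an endomorphism of `G`. -/
def InW {G : Type*} [AddCommGroup G] (H : AddSubgroup G) : Prop :=
  ∀ f : H →+ H, ∃ g : G →+ G, ∀ x : H, g x = (f x : G)

/-- `K` is an internal direct sum of cyclic subgroups. -/
def IsDirectSumOfCyclics {G : Type*} [AddCommGroup G] (K : AddSubgroup G) : Prop :=
  ∃ (ι : Type) (a : ι → G), (∀ i, a i ∈ K) ∧ (⨆ i, zmultiples (a i)) = K ∧
    iSupIndep (fun i => zmultiples (a i))

/-- `K` is a `p`-pure subgroup: `pⁿG ∩ K = pⁿK`. -/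
def IsPure (p : ℕ) {G : Type*} [AddCommGroup G] (K : AddSubgroup G) : Prop :=
  ∀ n : ℕ, ∀ x ∈ K, (∃ y : G, p ^ n • y = x) → ∃ z ∈ K, p ^ n • z = x

/-- The quotient `G/K` is divisible (equivalently `G = K + pG`). -/
def QuotDivisible (p : ℕ) {G : Type*} [AddCommGroup G] (K : AddSubgroup G) : Prop :=
  ∀ x : G, ∃ y : G, x - p • y ∈ K

/-- The Ulm sequence of `x` has a gap before index `k` (with `h₋₁ = -1`). -/
def HasGapBefore (p : ℕ) {G : Type*} [AddCommGroup G] (x : G) (k : ℕ) : Prop :=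
  if k = 0 then 0 < pHeight p x
  else pHeight p (p ^ (k - 1) • x) + 1 < pHeight p (p ^ k • x)


section Aux
variable {G : Type*} [AddCommGroup G] {p : ℕ}

lemma le_pHeight' {x y : G} {m : ℕ} (hy : p ^ m • y = x) : (m : ℕ∞) ≤ pHeight p x :=
  le_sSup ⟨m, rfl, y, hy⟩

lemma exists_of_le_pHeight {x : G} {m : ℕ} (h : (m : ℕ∞) ≤ pHeight p x) :
    ∃ y : G, p ^ m • y = x := by
  rcases Nat.eq_zero_or_pos m with rfl | hm
  · exact ⟨x, by simp⟩
  · have h1 : ((m - 1 : ℕ) : ℕ∞) < pHeight p x :=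
      lt_of_lt_of_le (by exact_mod_cast Nat.pred_lt hm.ne') h
    obtain ⟨b, hb, hlt⟩ := lt_sSup_iff.mp h1
    obtain ⟨m', rfl, y, hy⟩ := hb
    have hm' : m ≤ m' := by
      have : (m - 1 : ℕ) < m' := by exact_mod_cast hlt
      omega
    refine ⟨p ^ (m' - m) • y, ?_⟩
    rw [smul_smul, ← pow_add, Nat.add_sub_cancel' hm', hy]

lemma forall_le_pHeight {A : ℕ∞} {x : G}
    (h : ∀ m : ℕ, (m : ℕ∞) ≤ A → ∃ y : G, p ^ m • y = x) : A ≤ pHeight p x := by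
  cases A with
  | top =>
    by_contra hc
    push_neg at hc
    lift pHeight p x to ℕ using hc.ne with b hb
    have h2 := le_pHeight' (h (b + 1) le_top).choose_spec
    rw [← hb] at h2
    have : b + 1 ≤ b := by exact_mod_cast h2
    omega
  | coe a => exact le_pHeight' (h a le_rfl).choose_spec

lemma pHeight_zero : pHeight p (0 : G) = ⊤ :=
  top_le_iff.mp (forall_le_pHeight fun m _ => ⟨0, smul_zero _⟩)

lemma ne_zero_of_pHeight_lt_top {x : G} (h : pHeight p x < ⊤) : x ≠ 0 := by
  rintro rfl
  rw [pHeight_zero] at h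
  exact lt_irrefl _ h

lemma pHeight_neg (x : G) : pHeight p (-x) = pHeight p x := by
  have key : ∀ z : G, pHeight p z ≤ pHeight p (-z) := by
    intro z
    refine forall_le_pHeight fun m hm => ?_
    obtain ⟨y, hy⟩ := exists_of_le_pHeight hm
    exact ⟨-y, by rw [smul_neg, hy]⟩
  refine le_antisymm ?_ (key x)
  simpa using key (-x)

lemma pHeight_smul_le (x : G) (k : ℕ) : pHeight p x + (k : ℕ∞) ≤ pHeight p (p ^ k • x) := by
  induction k with
  | zero => simp
  | succ k ih =>
    have h1 : pHeight p (p ^ k • x) + 1 ≤ pHeight p (p ^ (k + 1) • x) := by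
      refine forall_le_pHeight fun m hm => ?_
      rcases Nat.eq_zero_or_pos m with rfl | hm0
      · exact ⟨p ^ (k + 1) • x, by simp⟩
      · have hle : ((m - 1 : ℕ) : ℕ∞) ≤ pHeight p (p ^ k • x) := by
          cases hA : pHeight p (p ^ k • x) with
          | top => exact le_top
          | coe a =>
            rw [hA] at hm
            have : m ≤ a + 1 := by exact_mod_cast hm
            exact_mod_cast (by omega : m - 1 ≤ a)
        obtain ⟨y, hy⟩ := exists_of_le_pHeight hle
        refine ⟨y, ?_⟩
        have e : m - 1 + 1 = m := by omega
        calc p ^ m • y = p • p ^ (m - 1) • y := by rw [smul_smul, ← pow_succ', e]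
          _ = p • p ^ k • x := by rw [hy]
          _ = p ^ (k + 1) • x := by rw [smul_smul, ← pow_succ']
    calc pHeight p x + ((k + 1 : ℕ) : ℕ∞) = (pHeight p x + (k : ℕ∞)) + 1 := by
          push_cast; rw [add_assoc]
      _ ≤ pHeight p (p ^ k • x) + 1 := add_le_add ih le_rfl
      _ ≤ _ := h1

lemma pHeight_min_le_add (a b : G) :
    min (pHeight p a) (pHeight p b) ≤ pHeight p (a + b) := by
  refine forall_le_pHeight fun m hm => ?_
  obtain ⟨y, hy⟩ := exists_of_le_pHeight (hm.trans (min_le_left _ _))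
  obtain ⟨y', hy'⟩ := exists_of_le_pHeight (hm.trans (min_le_right _ _))
  exact ⟨y + y', by rw [smul_add, hy, hy']⟩

lemma pHeight_add_eq {a b : G} (h : pHeight p a < pHeight p b) :
    pHeight p (a + b) = pHeight p a := by
  have hmin : min (pHeight p a) (pHeight p b) ≤ pHeight p (a + b) := pHeight_min_le_add a b
  rw [min_eq_left h.le] at hmin
  refine le_antisymm ?_ hmin
  by_contra hc
  push_neg at hc
  have h2 : pHeight p a < pHeight p ((a + b) + (-b)) := by
    refine lt_of_lt_of_le (lt_min hc ?_) (pHeight_min_le_add _ _)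
    rwa [pHeight_neg]
  rw [add_neg_cancel_right] at h2
  exact lt_irrefl _ h2

lemma pHeight_sub_eq {a b : G} (h : pHeight p a < pHeight p b) :
    pHeight p (a - b) = pHeight p a := by
  rw [sub_eq_add_neg, pHeight_add_eq]
  rwa [pHeight_neg]

end Aux

theorem stmt6 {G : Type*} [AddCommGroup G] (p : ℕ) (hp : p.Prime) (hG : IsPGrp p G)
    (x : G) (n : ℕ) (hx : addOrderOf x = p ^ n)
    (hU : ∀ z ∈ zmultiples x, (∀ m : ℕ, ∃ y : G, p ^ m • y = z) → z = 0)
    (k₁ k₂ : ℕ) (h12 : k₁ < k₂) (h2n : k₂ < n)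
    (hg1 : HasGapBefore p x k₁) (hg2 : HasGapBefore p x k₂) :
    (∃ y : G, addOrderOf y = p ^ n ∧
        ∃ k : ℕ, pHeight p (p ^ k • y) < pHeight p (p ^ k • x)) ∧
      ¬ InP (zmultiples x) := by
  haveI : Fact p.Prime := ⟨hp⟩
  -- heights of p^k • x are finite for k < n
  have hxk : ∀ k : ℕ, k < n → ¬ p ^ k • x = 0 := by
    intro k hk h0
    have hdvd : addOrderOf x ∣ p ^ k := addOrderOf_dvd_of_nsmul_eq_zero h0
    rw [hx] at hdvd
    have := (pow_dvd_pow_iff hp.pos.ne' hp.not_isUnit).mp hdvd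
    omega
  have hfin : ∀ k : ℕ, k < n → pHeight p (p ^ k • x) ≠ ⊤ := by
    intro k hk htop
    refine hxk k hk (hU _ ⟨((p ^ k : ℕ) : ℤ), natCast_zsmul x (p ^ k)⟩ fun m => ?_)
    exact exists_of_le_pHeight (htop ▸ le_top)
  -- name the relevant heights
  obtain ⟨h, hh⟩ : ∃ h : ℕ, pHeight p (p ^ (k₂ - 1) • x) = (h : ℕ∞) := by
    lift pHeight p (p ^ (k₂ - 1) • x) to ℕ using hfin _ (by omega) with b hb
    exact ⟨b, rfl⟩
  obtain ⟨a₁, ha₁⟩ : ∃ a₁ : ℕ, pHeight p (p ^ k₁ • x) = (a₁ : ℕ∞) := by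
    lift pHeight p (p ^ k₁ • x) to ℕ using hfin _ (by omega) with b hb
    exact ⟨b, rfl⟩
  obtain ⟨b₁, hb₁⟩ : ∃ b₁ : ℕ, pHeight p (p ^ (k₁ - 1) • x) = (b₁ : ℕ∞) := by
    lift pHeight p (p ^ (k₁ - 1) • x) to ℕ using hfin _ (by omega) with b hb
    exact ⟨b, rfl⟩
  -- height ≥ index
  have hidx : ∀ k : ℕ, (k : ℕ∞) ≤ pHeight p (p ^ k • x) := fun k => le_pHeight' rfl
  have hk2h : k₂ - 1 ≤ h := by
    have := hidx (k₂ - 1); rw [hh] at this; exact_mod_cast this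
  -- chain inequality
  have hchain : ∀ i j : ℕ, i ≤ j →
      pHeight p (p ^ i • x) + ((j - i : ℕ) : ℕ∞) ≤ pHeight p (p ^ j • x) := by
    intro i j hij
    have h1 := pHeight_smul_le (p := p) (p ^ i • x) (j - i)
    rwa [smul_smul, ← pow_add, Nat.sub_add_cancel hij] at h1
  have ha1h : a₁ + (k₂ - 1 - k₁) ≤ h := by
    have := hchain k₁ (k₂ - 1) (by omega)
    rw [ha₁, hh] at this
    exact_mod_cast this
  -- the second gap: get w
  have hg2' : (h : ℕ∞) + 1 < pHeight p (p ^ k₂ • x) := by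
    rw [HasGapBefore, if_neg (by omega : ¬ k₂ = 0)] at hg2
    rwa [hh] at hg2
  obtain ⟨w, hw⟩ : ∃ w : G, p ^ (h + 2) • w = p ^ k₂ • x := by
    refine exists_of_le_pHeight ?_
    have : ((h : ℕ∞) + 1) + 1 ≤ pHeight p (p ^ k₂ • x) := Order.add_one_le_of_lt hg2'
    exact_mod_cast this
  set z : G := p ^ (h + 2 - k₂) • w with hzdef
  have hz2 : p ^ k₂ • z = p ^ k₂ • x := by
    rw [hzdef, smul_smul, ← pow_add]
    rw [(by omega : k₂ + (h + 2 - k₂) = h + 2), hw]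
  set y : G := x - z with hydef
  have hy0 : p ^ k₂ • y = 0 := by rw [hydef, smul_sub, hz2, sub_self]
  have hxmy : x - y = z := sub_sub_cancel x z
  -- height of p^k₁ • z is large
  have hzk : ∀ i : ℕ, ((h + 2 - k₂ + i : ℕ) : ℕ∞) ≤ pHeight p (p ^ i • z) := by
    intro i
    refine le_pHeight' (y := w) ?_
    rw [hzdef, smul_smul, ← pow_add, Nat.add_comm i (h + 2 - k₂)]
  -- height of p^k₁ • y equals a₁
  have hyk1 : pHeight p (p ^ k₁ • y) = (a₁ : ℕ∞) := by
    have hsub : p ^ k₁ • y = p ^ k₁ • x - p ^ k₁ • z := by rw [hydef, smul_sub]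
    rw [hsub, pHeight_sub_eq, ha₁]
    rw [ha₁]
    refine lt_of_lt_of_le ?_ (hzk k₁)
    exact_mod_cast (by omega : a₁ < h + 2 - k₂ + k₁)
  -- the first gap: define c
  set c : ℕ := if k₁ = 0 then 0 else b₁ + 1 with hcdef
  have hca : c + 1 ≤ a₁ ∧ k₁ ≤ c := by
    rcases Nat.eq_zero_or_pos k₁ with hk10 | hk10
    · rw [HasGapBefore, if_pos hk10] at hg1
      subst hk10
      rw [pow_zero, one_smul] at ha₁
      have h0 : (0 : ℕ∞) < (a₁ : ℕ∞) := by rw [← ha₁]; exact hg1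
      have : 0 < a₁ := by exact_mod_cast h0
      simp [hcdef]; omega
    · rw [HasGapBefore, if_neg (by omega : ¬ k₁ = 0), hb₁, ha₁] at hg1
      have h1 : b₁ + 1 < a₁ := by exact_mod_cast hg1
      have h2 : k₁ - 1 ≤ b₁ := by
        have := hidx (k₁ - 1); rw [hb₁] at this; exact_mod_cast this
      rw [hcdef, if_neg (by omega : ¬ k₁ = 0)]
      omega
  obtain ⟨hca1, hck⟩ := hca
  -- get u
  obtain ⟨u, hu⟩ : ∃ u : G, p ^ (c + 1) • u = p ^ k₁ • y := by
    refine exists_of_le_pHeight ?_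
    rw [hyk1]
    exact_mod_cast hca1
  -- height of p^c • u
  have hcu_le : pHeight p (p ^ c • u) + 1 ≤ (a₁ : ℕ∞) := by
    have h1 := pHeight_smul_le (p := p) (p ^ c • u) 1
    rw [smul_smul, ← pow_add] at h1
    rw [(by omega : c + 1 = 1 + c)] at hu
    rw [hu, hyk1] at h1
    exact_mod_cast h1
  obtain ⟨d, hd⟩ : ∃ d : ℕ, pHeight p (p ^ c • u) = (d : ℕ∞) := by
    have : pHeight p (p ^ c • u) ≠ ⊤ := by
      intro htop
      rw [htop] at hcu_le
      simp at hcu_le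
    lift pHeight p (p ^ c • u) to ℕ using this with b hb
    exact ⟨b, rfl⟩
  have hda1 : d + 1 ≤ a₁ := by rw [hd] at hcu_le; exact_mod_cast hcu_le
  -- define Y
  set Y : G := x + p ^ (c - k₁) • u - p ^ (c - k₁ + 1) • u with hYdef
  have hYk1 : p ^ k₁ • Y = p ^ k₁ • z + p ^ c • u := by
    have e1 : k₁ + (c - k₁) = c := by omega
    have e2 : k₁ + (c - k₁ + 1) = c + 1 := by omega
    have hzy : p ^ k₁ • z = p ^ k₁ • x - p ^ k₁ • y := by rw [← smul_sub, hxmy]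
    rw [hYdef, smul_sub, smul_add, smul_smul, smul_smul, ← pow_add, ← pow_add, e1, e2, hu, hzy]
    abel
  have hd_lt : (d : ℕ∞) < pHeight p (p ^ k₁ • z) := by
    refine lt_of_lt_of_le ?_ (hzk k₁)
    exact_mod_cast (by omega : d < h + 2 - k₂ + k₁)
  have hYh : pHeight p (p ^ k₁ • Y) = (d : ℕ∞) := by
    rw [hYk1, add_comm, pHeight_add_eq, hd]
    rw [hd]; exact hd_lt
  have hfinal : pHeight p (p ^ k₁ • Y) < pHeight p (p ^ k₁ • x) := by
    rw [hYh, ha₁]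
    exact_mod_cast (by omega : d < a₁)
  -- order of Y
  have hzsmul : ∀ j : ℕ, k₂ ≤ j → p ^ j • y = 0 := by
    intro j hj
    rw [(by omega : j = j - k₂ + k₂), pow_add, ← smul_smul, hy0, smul_zero]
  have hYu : ∀ j : ℕ, k₁ + 1 ≤ j →
      p ^ (j + (c - k₁)) • u = p ^ (j - 1) • y ∧ p ^ (j + (c - k₁ + 1)) • u = p ^ j • y := by
    intro j hj
    constructor
    · rw [(by omega : j + (c - k₁) = (j - 1 - k₁) + (c + 1)), pow_add, ← smul_smul, hu,
        smul_smul, ← pow_add, (by omega : j - 1 - k₁ + k₁ = j - 1)]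
    · rw [(by omega : j + (c - k₁ + 1) = (j - k₁) + (c + 1)), pow_add, ← smul_smul, hu,
        smul_smul, ← pow_add, (by omega : j - k₁ + k₁ = j)]
  have hsmulY : ∀ j : ℕ, k₁ + 1 ≤ j →
      p ^ j • Y = p ^ j • x + p ^ (j - 1) • y - p ^ j • y := by
    intro j hj
    obtain ⟨e1, e2⟩ := hYu j hj
    rw [hYdef, smul_sub, smul_add, smul_smul, smul_smul, ← pow_add, ← pow_add, e1, e2]
  have hYn : p ^ n • Y = 0 := by
    rw [hsmulY n (by omega), hzsmul (n - 1) (by omega), hzsmul n (by omega)]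
    rw [← hx, addOrderOf_nsmul_eq_zero]
    abel
  have hYn1 : ¬ p ^ (n - 1) • Y = 0 := by
    have hs := hsmulY (n - 1) (by omega)
    rw [hzsmul (n - 1) (by omega)] at hs
    rcases Nat.lt_or_ge k₂ (n - 1) with hcase | hcase
    · -- k₂ ≤ n - 2 : p^(n-2) • y = 0
      rw [hzsmul (n - 1 - 1) (by omega)] at hs
      rw [hs]
      simpa using hxk (n - 1) (by omega)
    · -- k₂ = n - 1
      have hk2 : k₂ = n - 1 := by omega
      have hy_height : pHeight p (p ^ (n - 1 - 1) • y) = (h : ℕ∞) := by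
        have hsub : p ^ (n - 1 - 1) • y = p ^ (k₂ - 1) • x - p ^ (k₂ - 1) • z := by
          rw [hydef, smul_sub, (by omega : n - 1 - 1 = k₂ - 1)]
        rw [hsub, pHeight_sub_eq, hh]
        rw [hh]
        refine lt_of_lt_of_le ?_ (hzk (k₂ - 1))
        exact_mod_cast (by omega : h < h + 2 - k₂ + (k₂ - 1))
      have hx_height : pHeight p (p ^ (n - 1 - 1) • y) < pHeight p (p ^ (n - 1) • x) := by
        rw [hy_height, (by omega : n - 1 = k₂)]
        exact lt_trans (by exact_mod_cast (by omega : (h : ℕ) < h + 1) : (h : ℕ∞) < (h : ℕ∞) + 1) hg2'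
      have : pHeight p (p ^ (n - 1) • Y) = (h : ℕ∞) := by
        rw [hs, sub_zero, add_comm, pHeight_add_eq hx_height, hy_height]
      intro h0
      rw [h0, pHeight_zero] at this
      exact (by simp : ((h : ℕ∞) ≠ ⊤)) this.symm
  have horder : addOrderOf Y = p ^ n := by
    have := addOrderOf_eq_prime_pow (p := p) (n := n - 1) (x := Y) hYn1
      (by rw [(by omega : n - 1 + 1 = n)]; exact hYn)
    rw [this, (by omega : n - 1 + 1 = n)]
  -- conclusion part 1
  refine ⟨⟨Y, horder, k₁, hfinal⟩, ?_⟩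
  -- part 2 : ¬ InP
  intro hInP
  have key : ∀ m m' : ℤ, m • x = m' • x → m • Y = m' • Y := by
    intro m m' hmm
    have h0 : (m - m') • x = 0 := by rw [sub_zsmul, hmm]; abel
    have hdvd : (addOrderOf x : ℤ) ∣ (m - m') := addOrderOf_dvd_iff_zsmul_eq_zero.mpr h0
    rw [hx, ← horder] at hdvd
    have h1 : (m - m') • Y = 0 := addOrderOf_dvd_iff_zsmul_eq_zero.mp hdvd
    rw [sub_zsmul] at h1
    rwa [add_neg_eq_zero] at h1
  have key' : ∀ m m' : ℤ, m • Y = m' • Y → m • x = m' • x := by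
    intro m m' hmm
    have h0 : (m - m') • Y = 0 := by rw [sub_zsmul, hmm]; abel
    have hdvd : (addOrderOf Y : ℤ) ∣ (m - m') := addOrderOf_dvd_iff_zsmul_eq_zero.mpr h0
    rw [horder, ← hx] at hdvd
    have h1 : (m - m') • x = 0 := addOrderOf_dvd_iff_zsmul_eq_zero.mp hdvd
    rw [sub_zsmul] at h1
    rwa [add_neg_eq_zero] at h1
  set sel : zmultiples x → ℤ := fun g => (mem_zmultiples_iff.mp g.2).choose with hseldef
  have hsel : ∀ g : zmultiples x, sel g • x = (g : G) := fun g =>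
    (mem_zmultiples_iff.mp g.2).choose_spec
  set f : zmultiples x →+ G := AddMonoidHom.mk' (fun g => sel g • Y) (by
    intro a b
    show sel (a + b) • Y = sel a • Y + sel b • Y
    rw [← add_zsmul]
    refine key _ _ ?_
    rw [add_zsmul, hsel, hsel, hsel, AddSubgroup.coe_add]) with hfdef
  have hfinj : Function.Injective f := by
    intro a b hab
    have h1 : sel a • Y = sel b • Y := hab
    have h2 : sel a • x = sel b • x := key' _ _ h1
    rw [hsel, hsel] at h2
    exact Subtype.ext h2
  obtain ⟨g, hg⟩ := hInP f hfinj
  have hgx : g x = Y := by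
    have h1 := hg ⟨x, mem_zmultiples x⟩
    have h2 : sel ⟨x, mem_zmultiples x⟩ • Y = Y := by
      have := key (sel ⟨x, mem_zmultiples x⟩) 1 (by rw [hsel, one_zsmul])
      rwa [one_zsmul] at this
    rw [hfdef] at h1
    simp only [AddMonoidHom.mk'_apply] at h1
    rw [h2] at h1
    exact h1
  -- g does not decrease heights
  have hmono : pHeight p (p ^ k₁ • x) ≤ pHeight p (p ^ k₁ • Y) := by
    have hgk : g (p ^ k₁ • x) = p ^ k₁ • Y := by rw [map_nsmul, hgx]
    refine forall_le_pHeight fun m hm => ?_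
    obtain ⟨v, hv⟩ := exists_of_le_pHeight hm
    exact ⟨g v, by rw [← map_nsmul, hv, hgk]⟩
  exact absurd hmono (not_le.mpr hfinal)
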